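/- Let D be a small category and K a finite set of cones in D, each of whose shape categories A_c is finite. Then the sequences of functors E_i, B_i and natural surjections p_i : B_i ⨿ E_i ⟶ B_{i+1} presenting the reflector of any X : D ⥤ Type into the models of (D, K) as the colimit of the chain with objects B_i(X) ⨿ E_i(X) can be chosen so that B_0(X) = X, E_0(X) is initial, and for every i ∈ ℕ, writing S_i = B_i(X) ⨿ E_i(X), the functor E_{i+1}(X) : D ⥤ Type is the left Kan extension along the functor ou : K ⥤ D (K regarded as a discrete category, sending c to ou_c) of the functor K ⥤ Type sending c to lim (S_i ∘ in_c); concretely, E_{i+1}(X)(d) ≅ Σ_{c ∈ K} Hom_D(ou_c, d) × lim (S_i ∘ in_c), naturally in d ∈ D. -/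

import Mathlib

universe u

open CategoryTheory CategoryTheory.Limits

/-- A cone in a small category `D`: a small shape category `A`, a diagram `in_c : A ⥤ D`,
a peak object `ou_c` of `D` and a natural transformation `ρ_c : Δ(ou_c) ⟹ in_c`. -/
structure SketchCone (D : Type u) [SmallCategory D] : Type (u + 1) where
  /-- the shape category of the cone -/
  A : Type u
  /-- the category instance on the shape -/
  [instA : SmallCategory A]
  /-- the diagram of the cone -/
  diag : A ⥤ D
  /-- the peak of the cone -/
  pt : D
  /-- the cone natural transformation -/
  ρ : (Functor.const A).obj pt ⟶ diag

attribute [instance] SketchCone.instA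

variable {D : Type u} [SmallCategory D]

/-- The canonical comparison map `X(ou_c) ⟶ lim (X ∘ in_c)` induced by the maps
`X(ρ_c(a))`, `a ∈ A_c`. -/
noncomputable def canonicalMap (c : SketchCone D) (X : D ⥤ Type u) :
    X.obj c.pt ⟶ limit (c.diag ⋙ X) :=
  limit.lift (c.diag ⋙ X)
    { pt := X.obj c.pt
      π := (Functor.constComp c.A c.pt X).inv ≫ Functor.whiskerRight c.ρ X }

/-- A functor `X : D ⥤ Type` is a model of `(D, K)` (with `K` a family of cones) if for
every cone `c` of the family the canonical comparison map is a bijection. -/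
def IsModelF {ι : Type u} (K : ι → SketchCone D) (X : D ⥤ Type u) : Prop :=
  ∀ i : ι, Function.Bijective (canonicalMap (K i) X)

/-- The left Kan extension along `ou : K ⥤ D` (with `K` discrete) of the functor
`c ↦ lim (S ∘ in_c)`, computed by the coproduct formula
`d ↦ Σ_{c ∈ K} Hom_D(ou_c, d) × lim (S ∘ in_c)`. -/
noncomputable def kanObj {ι : Type u} (K : ι → SketchCone D) (S : D ⥤ Type u) :
    D ⥤ Type u where
  obj d := Σ i : ι, ((K i).pt ⟶ d) × limit ((K i).diag ⋙ S)
  map f := TypeCat.ofHom fun x => ⟨x.1, (x.2.1 ≫ f, x.2.2)⟩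
  map_id d := by ext x : 3; simp
  map_comp f g := by ext x : 3; simp

/-!
STATEMENT 9: Let `D` be a small category and `K` a finite set of cones, each with finite
shape.  The sequences of functors `E_i`, `B_i` and natural surjections
`p_i : B_i ⨿ E_i ⟶ B_{i+1}` presenting the reflector of any `X : D ⥤ Type` into the models
of `(D, K)` can be chosen so that `B_0(X) = X`, `E_0(X)` is initial, and, writing
`S_i = B_i(X) ⨿ E_i(X)`, the functor `E_{i+1}(X)` is the left Kan extension along
`ou : K ⥤ D` of `c ↦ lim (S_i ∘ in_c)`, i.e. concretely
`E_{i+1}(X)(d) ≅ Σ_{c ∈ K} Hom_D(ou_c, d) × lim (S_i ∘ in_c)` naturally in `d`. -/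

namespace ReflAux

lemma canonicalMap_π (c : SketchCone D) (X : D ⥤ Type u) (a : c.A) (x : X.obj c.pt) :
    limit.π (c.diag ⋙ X) a (canonicalMap c X x) = X.map (c.ρ.app a) x := by
  have := types_congr_hom (limit.lift_π
    { pt := X.obj c.pt
      π := (Functor.constComp c.A c.pt X).inv ≫ Functor.whiskerRight c.ρ X } a) x
  simpa [canonicalMap, Functor.constComp] using this

/-- naturality of the canonical map -/
lemma canonicalMap_natural (c : SketchCone D) {X Y : D ⥤ Type u} (φ : X ⟶ Y)
    (x : X.obj c.pt) :
    canonicalMap c Y (φ.app c.pt x) =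
      limMap (Functor.whiskerLeft c.diag φ) (canonicalMap c X x) := by
  apply Types.limit_ext
  intro a
  have h1 := types_congr_hom (limMap_π (Functor.whiskerLeft c.diag φ) a) (canonicalMap c X x)
  simp only [types_comp_apply] at h1
  rw [canonicalMap_π, h1, canonicalMap_π]
  exact (types_congr_hom (φ.naturality (c.ρ.app a)) x).symm

/-- the empty functor -/
def PEmptyF : D ⥤ Type u where
  obj _ := PEmpty.{u + 1}
  map _ := TypeCat.ofHom id

/-- pointwise sum of two functors -/
def sumOf (F G : D ⥤ Type u) : D ⥤ Type u where
  obj d := F.obj d ⊕ G.obj d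
  map f := TypeCat.ofHom (Sum.map (F.map f) (G.map f))
  map_id d := by ext x; cases x <;> simp
  map_comp f g := by ext x; cases x <;> simp

@[simp] lemma sumOf_map_inl (F G : D ⥤ Type u) {d d' : D} (f : d ⟶ d') (x : F.obj d) :
    (sumOf F G).map f (Sum.inl x) = Sum.inl (F.map f x) := rfl

@[simp] lemma sumOf_map_inr (F G : D ⥤ Type u) {d d' : D} (f : d ⟶ d') (x : G.obj d) :
    (sumOf F G).map f (Sum.inr x) = Sum.inr (G.map f x) := rfl

def inlN (F G : D ⥤ Type u) : F ⟶ sumOf F G where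
  app _ := TypeCat.ofHom Sum.inl
  naturality _ _ _ := rfl

def inrN (F G : D ⥤ Type u) : G ⟶ sumOf F G where
  app _ := TypeCat.ofHom Sum.inr
  naturality _ _ _ := rfl

def sumHom {F F' G G' : D ⥤ Type u} (f : F ⟶ F') (g : G ⟶ G') :
    sumOf F G ⟶ sumOf F' G' where
  app d := TypeCat.ofHom (Sum.map (f.app d) (g.app d))
  naturality d d' h := by
    ext x
    cases x with
    | inl a =>
        exact congr_arg Sum.inl (types_congr_hom (f.naturality h) a)
    | inr b =>
        exact congr_arg Sum.inr (types_congr_hom (g.naturality h) b)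

@[simp] lemma sumHom_app_inl {F F' G G' : D ⥤ Type u} (f : F ⟶ F') (g : G ⟶ G') (d : D)
    (x : F.obj d) : (sumHom f g).app d (Sum.inl x) = Sum.inl (f.app d x) := rfl

@[simp] lemma sumHom_app_inr {F F' G G' : D ⥤ Type u} (f : F ⟶ F') (g : G ⟶ G') (d : D)
    (x : G.obj d) : (sumHom f g).app d (Sum.inr x) = Sum.inr (g.app d x) := rfl

variable {ι : Type u} (K : ι → SketchCone D)

lemma limMapId {A : Type u} [SmallCategory A] (F : A ⥤ Type u) :
    limMap (𝟙 F) = 𝟙 (limit F) := by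
  apply limit.hom_ext; intro j; simp

lemma limMapComp {A : Type u} [SmallCategory A] {F G H : A ⥤ Type u}
    (α : F ⟶ G) (β : G ⟶ H) : limMap (α ≫ β) = limMap α ≫ limMap β := by
  apply limit.hom_ext; intro j; simp

/-- functorial action of `kanObj` -/
noncomputable def kanMap {S T : D ⥤ Type u} (φ : S ⟶ T) : kanObj K S ⟶ kanObj K T where
  app d := TypeCat.ofHom fun x => ⟨x.1, (x.2.1, limMap (Functor.whiskerLeft (K x.1).diag φ) x.2.2)⟩
  naturality d d' f := rfl

lemma kanMap_id (S : D ⥤ Type u) : kanMap K (𝟙 S) = 𝟙 (kanObj K S) := by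
  apply NatTrans.ext
  funext d; ext x
  obtain ⟨i, f, l⟩ := x
  simp [kanMap, Functor.whiskerLeft_id', limMapId]
  rfl

lemma kanMap_comp {S T U : D ⥤ Type u} (φ : S ⟶ T) (ψ : T ⟶ U) :
    kanMap K (φ ≫ ψ) = kanMap K φ ≫ kanMap K ψ := by
  apply NatTrans.ext
  funext d; ext x
  obtain ⟨i, f, l⟩ := x
  simp [kanMap, Functor.whiskerLeft_comp, limMapComp]
  rfl

/-- `kanObj` preserves isomorphisms -/
noncomputable def kanIso {S T : D ⥤ Type u} (e : S ≅ T) : kanObj K S ≅ kanObj K T where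
  hom := kanMap K e.hom
  inv := kanMap K e.inv
  hom_inv_id := by rw [← kanMap_comp, e.hom_inv_id, kanMap_id]
  inv_hom_id := by rw [← kanMap_comp, e.inv_hom_id, kanMap_id]

/-- the functorial kan extension -/
noncomputable def kanF : (D ⥤ Type u) ⥤ (D ⥤ Type u) where
  obj S := kanObj K S
  map φ := kanMap K φ
  map_id S := kanMap_id K S
  map_comp φ ψ := kanMap_comp K φ ψ

/-- the "injectivity" relation: two elements with the same images under all legs of a
cone get identified (closed under the `D`-action by construction). -/
def rel1 (S : D ⥤ Type u) (d : D) (x y : S.obj d) : Prop :=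
  ∃ (i : ι) (g : (K i).pt ⟶ d) (x' y' : S.obj (K i).pt),
    (∀ a : (K i).A, S.map ((K i).ρ.app a) x' = S.map ((K i).ρ.app a) y') ∧
    x = S.map g x' ∧ y = S.map g y'

lemma rel1_map {S : D ⥤ Type u} {d d' : D} (f : d ⟶ d') {x y : S.obj d}
    (h : rel1 K S d x y) : rel1 K S d' (S.map f x) (S.map f y) := by
  obtain ⟨i, g, x', y', hc, rfl, rfl⟩ := h
  exact ⟨i, g ≫ f, x', y', hc, (FunctorToTypes.map_comp_apply S g f x').symm,
    (FunctorToTypes.map_comp_apply S g f y').symm⟩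

lemma rel1_pres {S T : D ⥤ Type u} (φ : S ⟶ T) {d : D} {x y : S.obj d}
    (h : rel1 K S d x y) : rel1 K T d (φ.app d x) (φ.app d y) := by
  obtain ⟨i, g, x', y', hc, rfl, rfl⟩ := h
  refine ⟨i, g, φ.app _ x', φ.app _ y', fun a => ?_, ?_, ?_⟩
  · exact (NatTrans.naturality_apply φ ((K i).ρ.app a) x').symm.trans
      ((congrArg (φ.app _) (hc a)).trans
        (NatTrans.naturality_apply φ ((K i).ρ.app a) y'))
  · exact NatTrans.naturality_apply φ g x'
  · exact NatTrans.naturality_apply φ g y'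

/-- a map into a model identifies `rel1`-related elements -/
lemma rel1_model {M : D ⥤ Type u} (hM : IsModelF K M) {d : D} {x y : M.obj d}
    (h : rel1 K M d x y) : x = y := by
  obtain ⟨i, g, x', y', hc, rfl, rfl⟩ := h
  suffices hxy : x' = y' by rw [hxy]
  apply (hM i).1
  apply Types.limit_ext
  intro a
  rw [canonicalMap_π, canonicalMap_π, hc a]

lemma rel1_desc {S M : D ⥤ Type u} (hM : IsModelF K M) (φ : S ⟶ M) {d : D}
    {x y : S.obj d} (h : rel1 K S d x y) : φ.app d x = φ.app d y :=
  rel1_model K hM (rel1_pres K φ h)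

/-- A stage of the construction: the functors `B` and `E` together with the
"pending relations" `R` on the pointwise sum `B ⨿ E`, which are imposed in the next
quotient. -/
structure Stage (D : Type u) [SmallCategory D] : Type (u + 1) where
  B : (D ⥤ Type u) ⥤ (D ⥤ Type u)
  E : (D ⥤ Type u) ⥤ (D ⥤ Type u)
  R : ∀ (X : D ⥤ Type u) (d : D),
    (sumOf (B.obj X) (E.obj X)).obj d → (sumOf (B.obj X) (E.obj X)).obj d → Prop
  hmap : ∀ (X : D ⥤ Type u) {d d' : D} (f : d ⟶ d')
    (x y : (sumOf (B.obj X) (E.obj X)).obj d), R X d x y →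
    R X d' ((sumOf (B.obj X) (E.obj X)).map f x) ((sumOf (B.obj X) (E.obj X)).map f y)
  hnat : ∀ {X Y : D ⥤ Type u} (f : X ⟶ Y) (d : D)
    (x y : (sumOf (B.obj X) (E.obj X)).obj d), R X d x y →
    R Y d ((sumHom (B.map f) (E.map f)).app d x) ((sumHom (B.map f) (E.map f)).app d y)

variable {K}

/-- the sum functor of a stage, on objects -/
abbrev SFX (s : Stage D) (X : D ⥤ Type u) : D ⥤ Type u := sumOf (s.B.obj X) (s.E.obj X)

/-- the sum functor of a stage, on morphisms -/
def SFmap (s : Stage D) {X Y : D ⥤ Type u} (f : X ⟶ Y) : SFX s X ⟶ SFX s Y :=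
  sumHom (s.B.map f) (s.E.map f)

lemma SFmap_id (s : Stage D) (X : D ⥤ Type u) : SFmap s (𝟙 X) = 𝟙 (SFX s X) := by
  apply NatTrans.ext
  funext d; ext x
  cases x <;> simp [SFmap, SFX, s.B.map_id, s.E.map_id] <;> rfl

lemma SFmap_comp (s : Stage D) {X Y Z : D ⥤ Type u} (f : X ⟶ Y) (g : Y ⟶ Z) :
    SFmap s (f ≫ g) = SFmap s f ≫ SFmap s g := by
  apply NatTrans.ext
  funext d; ext x
  cases x <;> simp [SFmap, SFX, s.B.map_comp, s.E.map_comp] <;> rfl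

/-- the sum functor of a stage -/
def SFf (s : Stage D) : (D ⥤ Type u) ⥤ (D ⥤ Type u) where
  obj X := SFX s X
  map f := SFmap s f
  map_id X := SFmap_id s X
  map_comp f g := SFmap_comp s f g

variable (K)

/-- all the relations to quotient by at a given stage -/
def relAll (s : Stage D) (X : D ⥤ Type u) (d : D) (x y : (SFX s X).obj d) : Prop :=
  s.R X d x y ∨ rel1 K (SFX s X) d x y

lemma relAll_map (s : Stage D) (X : D ⥤ Type u) {d d' : D} (f : d ⟶ d')
    {x y : (SFX s X).obj d} (h : relAll K s X d x y) :
    relAll K s X d' ((SFX s X).map f x) ((SFX s X).map f y) := by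
  cases h with
  | inl h => exact Or.inl (s.hmap X f x y h)
  | inr h => exact Or.inr (rel1_map K f h)

lemma relAll_nat (s : Stage D) {X Y : D ⥤ Type u} (f : X ⟶ Y) (d : D)
    {x y : (SFX s X).obj d} (h : relAll K s X d x y) :
    relAll K s Y d ((SFmap s f).app d x) ((SFmap s f).app d y) := by
  cases h with
  | inl h => exact Or.inl (s.hnat f d x y h)
  | inr h => exact Or.inr (rel1_pres K (SFmap s f) h)

/-- the next `B` functor: quotient of the sum by all relations -/
def stepB (s : Stage D) : (D ⥤ Type u) ⥤ (D ⥤ Type u) where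
  obj X :=
    { obj := fun d => Quot (relAll K s X d)
      map := fun {d d'} f => TypeCat.ofHom (Quot.map ((SFX s X).map f) (fun _ _ h => relAll_map K s X f h))
      map_id := fun d => by
        ext x
        induction x using Quot.ind with
        | _ a => exact congr_arg (Quot.mk _) (FunctorToTypes.map_id_apply (SFX s X) a)
      map_comp := fun f g => by
        ext x
        induction x using Quot.ind with
        | _ a => exact congr_arg (Quot.mk _) (FunctorToTypes.map_comp_apply (SFX s X) f g a) }
  map {X Y} f :=
    { app := fun d => TypeCat.ofHom (Quot.map ((SFmap s f).app d) (fun _ _ h => relAll_nat K s f d h))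
      naturality := fun d d' g => by
        ext x
        induction x using Quot.ind with
        | _ a => exact congr_arg (Quot.mk _) (types_congr_hom ((SFmap s f).naturality g) a) }
  map_id X := by
    apply NatTrans.ext
    funext d; ext x
    induction x using Quot.ind with
    | _ a => exact congr_arg (Quot.mk _) (types_congr_hom (congr_app (SFmap_id s X) d) a)
  map_comp {X Y Z} f g := by
    apply NatTrans.ext
    funext d; ext x
    induction x using Quot.ind with
    | _ a => exact congr_arg (Quot.mk _) (types_congr_hom (congr_app (SFmap_comp s f g) d) a)

/-- the "filling" relation for the next stage -/
noncomputable def stepR (s : Stage D) (X : D ⥤ Type u) (d : D)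
    (x y : (sumOf ((stepB K s).obj X) ((SFf s ⋙ kanF K).obj X)).obj d) : Prop :=
  ∃ (i : ι) (a : (K i).A) (l : limit ((K i).diag ⋙ SFX s X)) (g : (K i).diag.obj a ⟶ d),
    x = Sum.inr ⟨i, ((K i).ρ.app a ≫ g, l)⟩ ∧
    y = Sum.inl (Quot.mk _ ((SFX s X).map g (limit.π ((K i).diag ⋙ SFX s X) a l)))

/-- one step of the construction -/
noncomputable def step (s : Stage D) : Stage D where
  B := stepB K s
  E := SFf s ⋙ kanF K
  R := stepR K s
  hmap := by
    rintro X d d' f x y ⟨i, a, l, g, rfl, rfl⟩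
    refine ⟨i, a, l, g ≫ f, ?_, ?_⟩
    · show Sum.inr ⟨i, (((K i).ρ.app a ≫ g) ≫ f, l)⟩ =
        (Sum.inr ⟨i, ((K i).ρ.app a ≫ g ≫ f, l)⟩ :
          (sumOf ((stepB K s).obj X) ((SFf s ⋙ kanF K).obj X)).obj d')
      rw [Category.assoc]
    · dsimp [stepB]
      exact congr_arg (Sum.inl ∘ Quot.mk _)
        (FunctorToTypes.map_comp_apply (SFX s X) g f _).symm
  hnat := by
    rintro X Y f d x y ⟨i, a, l, g, rfl, rfl⟩
    refine ⟨i, a, limMap (Functor.whiskerLeft (K i).diag (SFmap s f)) l, g, rfl, ?_⟩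
    dsimp [stepB]
    refine congr_arg (Sum.inl ∘ Quot.mk _) ?_
    have h1 := types_congr_hom (limMap_π (Functor.whiskerLeft (K i).diag (SFmap s f)) a) l
    simp only [types_comp_apply] at h1
    rw [h1]
    exact NatTrans.naturality_apply (SFmap s f) g
      (limit.π ((K i).diag ⋙ SFX s X) a l)

/-- stage 0 -/
def stage0 : Stage D where
  B := 𝟭 _
  E := (Functor.const _).obj PEmptyF
  R _ _ _ _ := False
  hmap := by rintro _ _ _ _ _ _ ⟨⟩
  hnat := by rintro _ _ _ _ _ _ ⟨⟩

/-- the sequence of stages -/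
noncomputable def stages : ℕ → Stage D
  | 0 => stage0
  | n + 1 => step K (stages n)

/-- the canonical projection onto the next `B` -/
noncomputable def pc (n : ℕ) (X : D ⥤ Type u) :
    SFX (stages K n) X ⟶ (stages K (n + 1)).B.obj X where
  app d := TypeCat.ofHom (Quot.mk _)
  naturality d d' f := rfl

lemma pc_surjective (n : ℕ) (X : D ⥤ Type u) (d : D) :
    Function.Surjective ((pc K n X).app d) := by
  intro q
  induction q using Quot.ind with
  | _ a => exact ⟨a, rfl⟩

/-- the categorical coproduct is isomorphic to the pointwise sum -/
noncomputable def coprodIsoSum (F G : D ⥤ Type u) : (F ⨿ G : D ⥤ Type u) ≅ sumOf F G where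
  hom := coprod.desc (inlN F G) (inrN F G)
  inv :=
    { app := fun d => TypeCat.ofHom (Sum.elim ((coprod.inl : F ⟶ F ⨿ G).app d)
        ((coprod.inr : G ⟶ F ⨿ G).app d))
      naturality := fun d d' f => by
        ext x
        cases x with
        | inl a => exact types_congr_hom ((coprod.inl : F ⟶ F ⨿ G).naturality f) a
        | inr b => exact types_congr_hom ((coprod.inr : G ⟶ F ⨿ G).naturality f) b }
  hom_inv_id := by
    apply coprod.hom_ext
    · rw [← Category.assoc, coprod.inl_desc, Category.comp_id]
      apply NatTrans.ext; funext d; ext x; rfl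
    · rw [← Category.assoc, coprod.inr_desc, Category.comp_id]
      apply NatTrans.ext; funext d; ext x; rfl
  inv_hom_id := by
    apply NatTrans.ext
    funext d; ext x
    cases x with
    | inl a =>
        exact (types_congr_hom (congr_app (coprod.inl_desc (inlN F G) (inrN F G)) d) a).trans rfl
    | inr b =>
        exact (types_congr_hom (congr_app (coprod.inr_desc (inlN F G) (inrN F G)) d) b).trans rfl

lemma inl_coprodIsoSum (F G : D ⥤ Type u) :
    (coprod.inl : F ⟶ F ⨿ G) ≫ (coprodIsoSum F G).hom = inlN F G :=
  coprod.inl_desc _ _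

lemma inr_coprodIsoSum (F G : D ⥤ Type u) :
    (coprod.inr : G ⟶ F ⨿ G) ≫ (coprodIsoSum F G).hom = inrN F G :=
  coprod.inr_desc _ _

/-- the statement-level `p` -/
noncomputable def pStmt (n : ℕ) (X : D ⥤ Type u) :
    ((stages K n).B.obj X ⨿ (stages K n).E.obj X) ⟶ (stages K (n + 1)).B.obj X :=
  (coprodIsoSum ((stages K n).B.obj X) ((stages K n).E.obj X)).hom ≫ pc K n X

lemma pStmt_surjective (n : ℕ) (X : D ⥤ Type u) (d : D) :
    Function.Surjective ((pStmt K n X).app d) := by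
  intro q
  obtain ⟨a, ha⟩ := pc_surjective K n X d q
  refine ⟨((coprodIsoSum _ _).inv).app d a, ?_⟩
  have h2 : (coprodIsoSum ((stages K n).B.obj X) ((stages K n).E.obj X)).hom.app d
      (((coprodIsoSum ((stages K n).B.obj X) ((stages K n).E.obj X)).inv).app d a) = a := by
    have := types_congr_hom (congr_app
      (coprodIsoSum ((stages K n).B.obj X) ((stages K n).E.obj X)).inv_hom_id d) a
    exact this
  show (pc K n X).app d ((coprodIsoSum _ _).hom.app d ((coprodIsoSum _ _).inv.app d a)) = q
  rw [h2, ha]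

lemma inl_pStmt (n : ℕ) (X : D ⥤ Type u) :
    (coprod.inl : _ ⟶ (stages K n).B.obj X ⨿ (stages K n).E.obj X) ≫ pStmt K n X =
      inlN _ _ ≫ pc K n X := by
  rw [pStmt, ← Category.assoc, inl_coprodIsoSum]

lemma inr_pStmt (n : ℕ) (X : D ⥤ Type u) :
    (coprod.inr : _ ⟶ (stages K n).B.obj X ⨿ (stages K n).E.obj X) ≫ pStmt K n X =
      inrN _ _ ≫ pc K n X := by
  rw [pStmt, ← Category.assoc, inr_coprodIsoSum]

lemma pStmt_natural (n : ℕ) {X Y : D ⥤ Type u} (f : X ⟶ Y) :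
    coprod.map ((stages K n).B.map f) ((stages K n).E.map f) ≫ pStmt K n Y =
      pStmt K n X ≫ (stages K (n + 1)).B.map f := by
  apply coprod.hom_ext
  · rw [coprod.inl_map_assoc, inl_pStmt, ← Category.assoc, ← Category.assoc, inl_pStmt]
    rw [Category.assoc, Category.assoc]
    apply NatTrans.ext; funext d; ext x; rfl
  · rw [coprod.inr_map_assoc, inr_pStmt, ← Category.assoc, ← Category.assoc, inr_pStmt]
    rw [Category.assoc, Category.assoc]
    apply NatTrans.ext; funext d; ext x; rfl

/-- `PEmptyF` is initial -/
noncomputable def isInitialPEmptyF : IsInitial (PEmptyF : D ⥤ Type u) :=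
  IsInitial.ofUniqueHom
    (fun Y =>
      { app := fun d => TypeCat.ofHom fun x => x.elim
        naturality := fun d d' f => by ext x; exact x.elim })
    (fun Y m => by apply NatTrans.ext; funext d; ext x; exact x.elim)

/-- the iso required for `E (n+1)` -/
noncomputable def EIso (n : ℕ) (X : D ⥤ Type u) :
    (stages K (n + 1)).E.obj X ≅
      kanObj K ((stages K n).B.obj X ⨿ (stages K n).E.obj X) :=
  kanIso K (coprodIsoSum ((stages K n).B.obj X) ((stages K n).E.obj X)).symm


lemma exists_natBound {α : Type v} [Finite α] (f : α → ℕ) : ∃ N, ∀ a, f a ≤ N := by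
  obtain ⟨N, hN⟩ := (Set.finite_range f).bddAbove
  exact ⟨N, fun a => hN (Set.mem_range_self a)⟩

/-- iso of limits along a natural iso -/
noncomputable def limMapIso {A : Type u} [SmallCategory A] {F G : A ⥤ Type u} (e : F ≅ G) :
    limit F ≅ limit G where
  hom := limMap e.hom
  inv := limMap e.inv
  hom_inv_id := by rw [← limMapComp, e.hom_inv_id, limMapId]
  inv_hom_id := by rw [← limMapComp, e.inv_hom_id, limMapId]

/-- models transfer along isomorphisms -/
lemma isModelF_of_iso {C1 C2 : D ⥤ Type u} (e : C1 ≅ C2) (h : IsModelF K C1) :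
    IsModelF K C2 := by
  intro i
  have hcomp : ∀ x : C2.obj (K i).pt, canonicalMap (K i) C2 x =
      limMap (Functor.whiskerLeft (K i).diag e.hom)
        (canonicalMap (K i) C1 (e.inv.app (K i).pt x)) := by
    intro x
    rw [← canonicalMap_natural]
    congr 1
    have h2 := types_congr_hom (congr_app e.inv_hom_id (K i).pt) x
    simpa using h2
  have hbij : Function.Bijective (fun x : C2.obj (K i).pt =>
      limMap (Functor.whiskerLeft (K i).diag e.hom)
        (canonicalMap (K i) C1 (e.inv.app (K i).pt x))) := by
    exact ((limMapIso (Functor.isoWhiskerLeft (K i).diag e)).toEquiv.bijective.comp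
      (h i)).comp ((e.app (K i).pt).symm.toEquiv.bijective)
  have : canonicalMap (K i) C2 = fun x =>
      limMap (Functor.whiskerLeft (K i).diag e.hom)
        (canonicalMap (K i) C1 (e.inv.app (K i).pt x)) := funext hcomp
  rw [this]
  exact hbij

section Chain

variable (X : D ⥤ Type u)

/-- the concrete chain objects -/
noncomputable abbrev Sc (n : ℕ) : D ⥤ Type u := SFX (stages K n) X

/-- the concrete chain maps -/
noncomputable def uc (n : ℕ) : Sc K X n ⟶ Sc K X (n + 1) := pc K n X ≫ inlN _ _

/-- the concrete chain -/
noncomputable def Fc : ℕ ⥤ (D ⥤ Type u) := Functor.ofSequence (uc K X)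

/-- the concrete colimit -/
noncomputable def Cc : D ⥤ Type u := colimit (Fc K X)

/-- the canonical cocone maps -/
noncomputable def ιc (n : ℕ) : Sc K X n ⟶ Cc K X := colimit.ι (Fc K X) n

lemma Fc_map_succ (n : ℕ) :
    (Fc K X).map (homOfLE (Nat.le_add_right n 1)) = uc K X n :=
  Functor.ofSequence_map_homOfLE_succ (uc K X) n

lemma ιc_succ (n : ℕ) (d : D) (z : (Sc K X n).obj d) :
    (ιc K X (n + 1)).app d ((uc K X n).app d z) = (ιc K X n).app d z := by
  have h := colimit.w (Fc K X) (homOfLE (Nat.le_add_right n 1))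
  rw [Fc_map_succ] at h
  exact types_congr_hom (congr_app h d) z

lemma ιc_le {n k : ℕ} (h : n ≤ k) (d : D) (y : (Sc K X n).obj d) :
    (ιc K X k).app d (((Fc K X).map (homOfLE h)).app d y) = (ιc K X n).app d y :=
  types_congr_hom (congr_app (colimit.w (Fc K X) (homOfLE h)) d) y

lemma Fc_map_trans {n m k : ℕ} (h1 : n ≤ m) (h2 : m ≤ k) (d : D) (y : (Sc K X n).obj d) :
    ((Fc K X).map (homOfLE h2)).app d (((Fc K X).map (homOfLE h1)).app d y) =
      ((Fc K X).map (homOfLE (h1.trans h2))).app d y := by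
  have : (Fc K X).map (homOfLE (h1.trans h2)) =
      (Fc K X).map (homOfLE h1) ≫ (Fc K X).map (homOfLE h2) := by
    rw [← Functor.map_comp]
    congr 1
  exact (types_congr_hom (congr_app this d) y).symm

lemma exists_rep (d : D) (x : (Cc K X).obj d) :
    ∃ (n : ℕ) (y : (Sc K X n).obj d), (ιc K X n).app d y = x := by
  let e := colimitObjIsoColimitCompEvaluation (Fc K X) d
  obtain ⟨n, y, hy⟩ := Types.jointly_surjective' (e.hom x)
  refine ⟨n, y, ?_⟩
  have h2 := types_congr_hom (colimitObjIsoColimitCompEvaluation_ι_inv (Fc K X) n d) y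
  simp only [types_comp_apply] at h2
  have h3 : (ιc K X n).app d y = e.inv (colimit.ι (Fc K X ⋙ (evaluation D (Type u)).obj d) n y) :=
    h2.symm
  rw [h3, hy]
  exact types_congr_hom e.hom_inv_id x

lemma ιc_eq_iff {n m : ℕ} (d : D) (y1 : (Sc K X n).obj d) (y2 : (Sc K X m).obj d) :
    (ιc K X n).app d y1 = (ιc K X m).app d y2 ↔
      ∃ (k : ℕ) (h1 : n ≤ k) (h2 : m ≤ k),
        ((Fc K X).map (homOfLE h1)).app d y1 = ((Fc K X).map (homOfLE h2)).app d y2 := by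
  let e := colimitObjIsoColimitCompEvaluation (Fc K X) d
  let G := Fc K X ⋙ (evaluation D (Type u)).obj d
  have key : ∀ (j : ℕ) (y : (Sc K X j).obj d),
      (ιc K X j).app d y = e.inv (colimit.ι G j y) := by
    intro j y
    exact (types_congr_hom (colimitObjIsoColimitCompEvaluation_ι_inv (Fc K X) j d) y).symm
  have einj : Function.Injective (e.inv : colimit G ⟶ (Cc K X).obj d) := by
    intro a b hab
    have ha := types_congr_hom e.inv_hom_id a
    have hb := types_congr_hom e.inv_hom_id b
    simp only [types_comp_apply, NatTrans.comp_app] at ha hb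
    calc a = e.hom (e.inv a) := ha.symm
      _ = e.hom (e.inv b) := congrArg e.hom hab
      _ = b := hb
  rw [key n y1, key m y2]
  have step1 : e.inv (colimit.ι G n y1) = e.inv (colimit.ι G m y2) ↔
      colimit.ι G n y1 = colimit.ι G m y2 :=
    ⟨fun hh => einj hh, fun hh => congrArg e.inv hh⟩
  erw [step1, Types.FilteredColimit.colimit_eq_iff]
  constructor
  · rintro ⟨k, f, g, hfg⟩
    exact ⟨k, leOfHom f, leOfHom g, by
      have h1 : homOfLE (leOfHom f) = f := Subsingleton.elim _ _
      have h2 : homOfLE (leOfHom g) = g := Subsingleton.elim _ _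
      rw [h1, h2]; exact hfg⟩
  · rintro ⟨k, h1, h2, hfg⟩
    exact ⟨k, homOfLE h1, homOfLE h2, hfg⟩

/-- the crucial identification: the formal cone point over `l` maps, along the cone legs,
to the components of `l` in the colimit -/
lemma ιc_inr_rho (n : ℕ) (i : ι) (a : (K i).A) (l : limit ((K i).diag ⋙ Sc K X n)) :
    (ιc K X (n + 1)).app ((K i).diag.obj a)
        (Sum.inr ⟨i, ((K i).ρ.app a, l)⟩ : (Sc K X (n + 1)).obj ((K i).diag.obj a)) =
      (ιc K X n).app _ (limit.π ((K i).diag ⋙ Sc K X n) a l) := by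
  have hrel : (pc K (n + 1) X).app ((K i).diag.obj a)
        (Sum.inr ⟨i, ((K i).ρ.app a, l)⟩) =
      (pc K (n + 1) X).app _ ((uc K X n).app _ (limit.π ((K i).diag ⋙ Sc K X n) a l)) := by
    apply Quot.sound
    refine Or.inl ⟨i, a, l, 𝟙 _, ?_, ?_⟩
    · rw [Category.comp_id]; rfl
    · exact congrArg (fun t => Sum.inl (Quot.mk _ t))
        (FunctorToTypes.map_id_apply (SFX (stages K n) X) _).symm
  calc (ιc K X (n + 1)).app _ (Sum.inr ⟨i, ((K i).ρ.app a, l)⟩)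
      = (ιc K X (n + 2)).app _
          ((uc K X (n + 1)).app _ (Sum.inr ⟨i, ((K i).ρ.app a, l)⟩)) :=
        (ιc_succ K X (n + 1) _ _).symm
    _ = (ιc K X (n + 2)).app _
          ((uc K X (n + 1)).app _ ((uc K X n).app _ (limit.π ((K i).diag ⋙ Sc K X n) a l))) :=
        congrArg (fun t => (ιc K X (n + 2)).app ((K i).diag.obj a) (Sum.inl t)) hrel
    _ = (ιc K X (n + 1)).app _ ((uc K X n).app _ (limit.π ((K i).diag ⋙ Sc K X n) a l)) :=
        ιc_succ K X (n + 1) _ _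
    _ = (ιc K X n).app _ (limit.π ((K i).diag ⋙ Sc K X n) a l) := ιc_succ K X n _ _


lemma finite_A (i : ι) (h : Finite (Σ (a : (K i).A) (b : (K i).A), a ⟶ b)) :
    Finite (K i).A :=
  Finite.of_injective (fun a => (⟨a, a, 𝟙 a⟩ : Σ (a : (K i).A) (b : (K i).A), a ⟶ b))
    (fun a b h => congrArg Sigma.fst h)

lemma isModel_Cc (hfin : ∀ i : ι, Finite (Σ (a : (K i).A) (b : (K i).A), a ⟶ b)) :
    IsModelF K (Cc K X) := by
  intro i
  haveI := hfin i
  haveI : Finite (K i).A := finite_A K i (hfin i)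
  constructor
  · -- injectivity
    intro x y hxy
    obtain ⟨n1, x0, hx0⟩ := exists_rep K X _ x
    obtain ⟨n2, y0, hy0⟩ := exists_rep K X _ y
    set n := max n1 n2 with hn
    set x1 := ((Fc K X).map (homOfLE (le_max_left n1 n2))).app _ x0 with hx1def
    set y1 := ((Fc K X).map (homOfLE (le_max_right n1 n2))).app _ y0 with hy1def
    have hx1 : (ιc K X n).app _ x1 = x := by rw [hx1def, ιc_le]; exact hx0
    have hy1 : (ιc K X n).app _ y1 = y := by rw [hy1def, ιc_le]; exact hy0
    have hcomp : ∀ a : (K i).A,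
        (ιc K X n).app _ ((Sc K X n).map ((K i).ρ.app a) x1) =
        (ιc K X n).app _ ((Sc K X n).map ((K i).ρ.app a) y1) := by
      intro a
      have h1 : (Cc K X).map ((K i).ρ.app a) x = (Cc K X).map ((K i).ρ.app a) y := by
        have h2 := congrArg (limit.π ((K i).diag ⋙ Cc K X) a) hxy
        rw [canonicalMap_π, canonicalMap_π] at h2
        exact h2
      have hx2 := types_congr_hom ((ιc K X n).naturality ((K i).ρ.app a)) x1
      have hy2 := types_congr_hom ((ιc K X n).naturality ((K i).ρ.app a)) y1
      simp only [types_comp_apply] at hx2 hy2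
      have e1 : (ιc K X n).app (((Functor.const (K i).A).obj (K i).pt).obj a) x1 = x := hx1
      have e2 : (ιc K X n).app (((Functor.const (K i).A).obj (K i).pt).obj a) y1 = y := hy1
      exact hx2.trans ((congrArg ((Cc K X).map ((K i).ρ.app a)) e1).trans (h1.trans (congrArg ((Cc K X).map ((K i).ρ.app a)) e2).symm) |>.trans hy2.symm)
    have hch : ∀ a : (K i).A, ∃ (k : ℕ) (h1 : n ≤ k),
        ((Fc K X).map (homOfLE h1)).app _ ((Sc K X n).map ((K i).ρ.app a) x1) =
        ((Fc K X).map (homOfLE h1)).app _ ((Sc K X n).map ((K i).ρ.app a) y1) := by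
      intro a
      obtain ⟨k, h1, h2, hk⟩ := (ιc_eq_iff K X _ _ _).mp (hcomp a)
      exact ⟨k, h1, hk⟩
    choose kf hkf hkeq using hch
    obtain ⟨m0, hm0⟩ := exists_natBound kf
    have hnm : n ≤ max n m0 := le_max_left _ _
    set m := max n m0 with hm
    set x2 := ((Fc K X).map (homOfLE hnm)).app _ x1 with hx2def
    set y2 := ((Fc K X).map (homOfLE hnm)).app _ y1 with hy2def
    have hcomp2 : ∀ a : (K i).A,
        (Sc K X m).map ((K i).ρ.app a) x2 = (Sc K X m).map ((K i).ρ.app a) y2 := by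
      intro a
      have hka : kf a ≤ m := le_trans (hm0 a) (le_max_right n m0)
      have h3 := congrArg (((Fc K X).map (homOfLE hka)).app _) (hkeq a)
      rw [Fc_map_trans, Fc_map_trans] at h3
      have hnatx := types_congr_hom (((Fc K X).map (homOfLE hnm)).naturality ((K i).ρ.app a)) x1
      have hnaty := types_congr_hom (((Fc K X).map (homOfLE hnm)).naturality ((K i).ρ.app a)) y1
      simp only [types_comp_apply] at hnatx hnaty
      exact hnatx.symm.trans (h3.trans hnaty)
    have hq : (pc K m X).app _ x2 = (pc K m X).app _ y2 := by
      apply Quot.sound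
      refine Or.inr ⟨i, 𝟙 (K i).pt, x2, y2, hcomp2, ?_, ?_⟩
      · exact (FunctorToTypes.map_id_apply (SFX (stages K m) X) x2).symm
      · exact (FunctorToTypes.map_id_apply (SFX (stages K m) X) y2).symm
    have hfin2 : (ιc K X m).app _ x2 = (ιc K X m).app _ y2 := by
      erw [← ιc_succ K X m, ← ιc_succ K X m]
      exact congrArg (fun t => (ιc K X (m + 1)).app (K i).pt (Sum.inl t)) hq
    erw [← hx1, ← hy1, ← ιc_le K X hnm, ← ιc_le K X hnm]
    exact hfin2
  · -- surjectivity
    intro w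
    have hrep : ∀ a : (K i).A, ∃ (n : ℕ) (y : (Sc K X n).obj ((K i).diag.obj a)),
        (ιc K X n).app _ y = limit.π ((K i).diag ⋙ Cc K X) a w :=
      fun a => exists_rep K X _ _
    choose nf yf hyf using hrep
    obtain ⟨N, hN⟩ := exists_natBound nf
    set σ : ∀ a : (K i).A, (Sc K X N).obj ((K i).diag.obj a) :=
      fun a => ((Fc K X).map (homOfLE (hN a))).app _ (yf a) with hσdef
    have hσ : ∀ a, (ιc K X N).app _ (σ a) = limit.π ((K i).diag ⋙ Cc K X) a w := by
      intro a
      rw [hσdef, ιc_le]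
      exact hyf a
    have hcompat : ∀ t : Σ (a : (K i).A) (b : (K i).A), a ⟶ b,
        ∃ (k : ℕ) (hk : N ≤ k),
          ((Fc K X).map (homOfLE hk)).app _
            ((Sc K X N).map ((K i).diag.map t.2.2) (σ t.1)) =
          ((Fc K X).map (homOfLE hk)).app _ (σ t.2.1) := by
      rintro ⟨a, b, φ⟩
      have h1 : (ιc K X N).app _ ((Sc K X N).map ((K i).diag.map φ) (σ a)) =
          (ιc K X N).app _ (σ b) := by
        have hnat := types_congr_hom ((ιc K X N).naturality ((K i).diag.map φ)) (σ a)
        simp only [types_comp_apply] at hnat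
        have hw := types_congr_hom (limit.w ((K i).diag ⋙ Cc K X) φ) w
        simp only [types_comp_apply] at hw
        rw [hnat, hσ a, hσ b]
        exact hw
      obtain ⟨k, hk1, hk2, hk⟩ := (ιc_eq_iff K X _ _ _).mp h1
      exact ⟨k, hk1, hk⟩
    choose kT hkT hTeq using hcompat
    obtain ⟨M0, hM0⟩ := exists_natBound kT
    have hNM : N ≤ max N M0 := le_max_left _ _
    set M := max N M0 with hM
    set τ : ∀ a : (K i).A, (Sc K X M).obj ((K i).diag.obj a) :=
      fun a => ((Fc K X).map (homOfLE hNM)).app _ (σ a) with hτdef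
    have hτι : ∀ a, (ιc K X M).app _ (τ a) = limit.π ((K i).diag ⋙ Cc K X) a w := by
      intro a
      rw [hτdef, ιc_le]
      exact hσ a
    have hsect : ∀ (a b : (K i).A) (φ : a ⟶ b),
        ((K i).diag ⋙ Sc K X M).map φ (τ a) = τ b := by
      intro a b φ
      have h2 := congrArg
        (((Fc K X).map (homOfLE (le_trans (hM0 ⟨a, b, φ⟩) (le_max_right N M0)))).app _)
        (hTeq ⟨a, b, φ⟩)
      rw [Fc_map_trans, Fc_map_trans] at h2
      have hnat := types_congr_hom
        (((Fc K X).map (homOfLE hNM)).naturality ((K i).diag.map φ)) (σ a)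
      simp only [types_comp_apply] at hnat
      exact hnat.symm.trans h2
    set sect : ((K i).diag ⋙ Sc K X M).sections :=
      ⟨fun a => τ a, fun {a b} φ => hsect a b φ⟩ with hsectdef
    set l := (Types.limitEquivSections ((K i).diag ⋙ Sc K X M)).symm sect with hldef
    refine ⟨(ιc K X (M + 1)).app _
      (Sum.inr ⟨i, (𝟙 (K i).pt, l)⟩ : (Sc K X (M + 1)).obj (K i).pt), ?_⟩
    apply Types.limit_ext
    intro a
    rw [canonicalMap_π]
    have hnat := types_congr_hom ((ιc K X (M + 1)).naturality ((K i).ρ.app a))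
      (Sum.inr ⟨i, (𝟙 (K i).pt, l)⟩)
    simp only [types_comp_apply] at hnat
    have hnat' : (Cc K X).map ((K i).ρ.app a)
        ((ιc K X (M + 1)).app (K i).pt
          (Sum.inr ⟨i, (𝟙 (K i).pt, l)⟩)) =
        (ιc K X (M + 1)).app ((K i).diag.obj a)
          ((Sc K X (M + 1)).map ((K i).ρ.app a) (Sum.inr ⟨i, (𝟙 (K i).pt, l)⟩)) := hnat.symm
    rw [hnat']
    have hel : ((Sc K X (M + 1)).map ((K i).ρ.app a)
          (Sum.inr ⟨i, (𝟙 (K i).pt, l)⟩) : (Sc K X (M + 1)).obj ((K i).diag.obj a)) =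
        Sum.inr ⟨i, ((K i).ρ.app a, l)⟩ := by
      show (Sum.inr ⟨i, (𝟙 (K i).pt ≫ (K i).ρ.app a, l)⟩ :
          (Sc K X (M + 1)).obj ((K i).diag.obj a)) = Sum.inr ⟨i, ((K i).ρ.app a, l)⟩
      rw [Category.id_comp]
    rw [hel, ιc_inr_rho]
    have hπ : limit.π ((K i).diag ⋙ Sc K X M) a l = τ a :=
      Types.limitEquivSections_symm_apply _ sect a
    rw [hπ, hτι a]

end Chain


section Universal

variable (X : D ⥤ Type u) {M : D ⥤ Type u}

/-- the canonical map of a model, as an equivalence -/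
noncomputable def cEquiv (hM : IsModelF K M) (i : ι) :
    M.obj (K i).pt ≃ limit ((K i).diag ⋙ M) :=
  Equiv.ofBijective _ (hM i)

lemma cEquiv_symm_rho (hM : IsModelF K M) (i : ι) (a : (K i).A)
    (w : limit ((K i).diag ⋙ M)) :
    M.map ((K i).ρ.app a) ((cEquiv K hM i).symm w) = limit.π ((K i).diag ⋙ M) a w := by
  have h1 := (cEquiv K hM i).apply_symm_apply w
  conv_rhs => rw [← h1]
  rw [show (cEquiv K hM i) ((cEquiv K hM i).symm w) =
    canonicalMap (K i) M ((cEquiv K hM i).symm w) from rfl]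
  rw [canonicalMap_π]

variable (hM : IsModelF K M) (f : X ⟶ M)

/-- the zeroth comparison map -/
noncomputable def g0 : Sc K X 0 ⟶ M where
  app d := TypeCat.ofHom (Sum.elim (f.app d) PEmpty.elim)
  naturality d d' h := by
    ext x
    cases x with
    | inl a => exact types_congr_hom (f.naturality h) a
    | inr b => exact b.elim

/-- the sequence of comparison maps out of the chain, with the compatibility needed
to descend through the quotients -/
noncomputable def gd : ∀ n : ℕ,
    {g : Sc K X n ⟶ M //
      ∀ (d : D) (x y : (Sc K X n).obj d), relAll K (stages K n) X d x y →
        g.app d x = g.app d y}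
  | 0 =>
    ⟨g0 K X f, by
      rintro d x y (hF | hr)
      · exact hF.elim
      · exact rel1_desc K hM (g0 K X f) hr⟩
  | (n + 1) => by
    obtain ⟨g, hg⟩ := gd n
    refine ⟨?_, ?_⟩
    · refine
        { app := fun d => TypeCat.ofHom (Sum.elim (Quot.lift (g.app d) (fun x y h => hg d x y h))
            (fun x => M.map x.2.1
              ((cEquiv K hM x.1).symm (limMap (Functor.whiskerLeft (K x.1).diag g) x.2.2))))
          naturality := fun d d' h => ?_ }
      ext x
      cases x with
      | inl q =>
          induction q using Quot.ind with
          | _ z => exact types_congr_hom (g.naturality h) z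
      | inr e =>
          obtain ⟨j, t, l⟩ := e
          exact FunctorToTypes.map_comp_apply M t h _
    · rintro d x y (hR | hr)
      · obtain ⟨j, a, l, g₀, rfl, rfl⟩ := hR
        show M.map ((K j).ρ.app a ≫ g₀)
            ((cEquiv K hM j).symm (limMap (Functor.whiskerLeft (K j).diag g) l)) =
          g.app d ((SFX (stages K n) X).map g₀ (limit.π ((K j).diag ⋙ SFX (stages K n) X) a l))
        rw [FunctorToTypes.map_comp_apply, cEquiv_symm_rho]
        have hπ := types_congr_hom (limMap_π (Functor.whiskerLeft (K j).diag g) a) l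
        simp only [types_comp_apply] at hπ
        erw [hπ]
        exact (types_congr_hom (g.naturality g₀)
          (limit.π ((K j).diag ⋙ SFX (stages K n) X) a l)).symm
      · exact rel1_desc K hM _ hr

lemma gd_succ_inl (n : ℕ) (d : D) (z : (Sc K X n).obj d) :
    (gd K X hM f (n + 1)).1.app d (Sum.inl (Quot.mk _ z)) = (gd K X hM f n).1.app d z := rfl

lemma gd_succ_inr (n : ℕ) (d : D) (j : ι) (t : (K j).pt ⟶ d)
    (l : limit ((K j).diag ⋙ Sc K X n)) :
    (gd K X hM f (n + 1)).1.app d (Sum.inr ⟨j, (t, l)⟩) =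
      M.map t ((cEquiv K hM j).symm
        (limMap (Functor.whiskerLeft (K j).diag (gd K X hM f n).1) l)) := rfl

/-- the cocone on the chain induced by the comparison maps -/
noncomputable def gCocone : Cocone (Fc K X) where
  pt := M
  ι := NatTrans.ofSequence (F := Fc K X) (G := (Functor.const ℕ).obj M)
    (fun n => (gd K X hM f n).1)
    (fun n => by
      rw [Fc_map_succ]
      apply NatTrans.ext
      funext d; ext z
      rfl)

/-- the comparison map out of the colimit -/
noncomputable def gbar : Cc K X ⟶ M := colimit.desc (Fc K X) (gCocone K X hM f)

lemma ι_gbar (n : ℕ) : ιc K X n ≫ gbar K X hM f = (gd K X hM f n).1 :=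
  colimit.ι_desc (gCocone K X hM f) n

lemma unique_aux (h' : Cc K X ⟶ M)
    (hf : inlN X PEmptyF ≫ ιc K X 0 ≫ h' = f) (n : ℕ) :
    ιc K X n ≫ h' = (gd K X hM f n).1 := by
  induction n with
  | zero =>
      apply NatTrans.ext
      funext d; ext x
      cases x with
      | inl a => exact types_congr_hom (congr_app hf d) a
      | inr b => exact b.elim
  | succ n IH =>
      apply NatTrans.ext
      funext d; ext x
      cases x with
      | inl q =>
          induction q using Quot.ind with
          | _ z =>
              have h1 : (ιc K X (n + 1)).app d
                  (Sum.inl (Quot.mk _ z) : (Sc K X (n + 1)).obj d) =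
                  (ιc K X n).app d z := ιc_succ K X n d z
              show h'.app d ((ιc K X (n + 1)).app d (Sum.inl (Quot.mk _ z))) = _
              erw [h1, TypeCat.Fun.toFun_apply, gd_succ_inl]
              exact types_congr_hom (congr_app IH d) z
      | inr e =>
          obtain ⟨j, t, l⟩ := e
          have key : h'.app (K j).pt ((ιc K X (n + 1)).app (K j).pt
              (Sum.inr ⟨j, (𝟙 (K j).pt, l)⟩)) =
              (cEquiv K hM j).symm (limMap (Functor.whiskerLeft (K j).diag (gd K X hM f n).1) l) := by
            apply (hM j).1
            apply Types.limit_ext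
            intro a
            have hrhs : limit.π ((K j).diag ⋙ M) a (canonicalMap (K j) M
                ((cEquiv K hM j).symm
                  (limMap (Functor.whiskerLeft (K j).diag (gd K X hM f n).1) l))) =
                (gd K X hM f n).1.app ((K j).diag.obj a)
                  (limit.π ((K j).diag ⋙ Sc K X n) a l) := by
              rw [canonicalMap_π, cEquiv_symm_rho]
              have hπ := types_congr_hom (limMap_π (Functor.whiskerLeft (K j).diag (gd K X hM f n).1) a) l
              simp only [types_comp_apply] at hπ
              erw [hπ]
              rfl
            rw [hrhs, canonicalMap_π]
            -- LHS
            have hn1 : M.map ((K j).ρ.app a)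
                (h'.app (K j).pt ((ιc K X (n + 1)).app (K j).pt
                  (Sum.inr ⟨j, (𝟙 (K j).pt, l)⟩))) =
                h'.app ((K j).diag.obj a) ((Cc K X).map ((K j).ρ.app a)
                  ((ιc K X (n + 1)).app (K j).pt (Sum.inr ⟨j, (𝟙 (K j).pt, l)⟩))) :=
              (types_congr_hom (h'.naturality ((K j).ρ.app a)) _).symm
            rw [hn1]
            have hn2 : (Cc K X).map ((K j).ρ.app a)
                ((ιc K X (n + 1)).app (K j).pt (Sum.inr ⟨j, (𝟙 (K j).pt, l)⟩)) =
                (ιc K X (n + 1)).app ((K j).diag.obj a)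
                  ((Sc K X (n + 1)).map ((K j).ρ.app a) (Sum.inr ⟨j, (𝟙 (K j).pt, l)⟩)) :=
              (types_congr_hom ((ιc K X (n + 1)).naturality ((K j).ρ.app a)) _).symm
            rw [hn2]
            have hel : ((Sc K X (n + 1)).map ((K j).ρ.app a)
                (Sum.inr ⟨j, (𝟙 (K j).pt, l)⟩) : (Sc K X (n + 1)).obj ((K j).diag.obj a)) =
                Sum.inr ⟨j, ((K j).ρ.app a, l)⟩ := by
              show (Sum.inr ⟨j, (𝟙 (K j).pt ≫ (K j).ρ.app a, l)⟩ :
                  (Sc K X (n + 1)).obj ((K j).diag.obj a)) = Sum.inr ⟨j, ((K j).ρ.app a, l)⟩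
              rw [Category.id_comp]
            erw [hel, ιc_inr_rho]
            exact types_congr_hom (congr_app IH ((K j).diag.obj a))
              (limit.π ((K j).diag ⋙ Sc K X n) a l)
          have hmap : (Sum.inr ⟨j, (t, l)⟩ : (Sc K X (n + 1)).obj d) =
              (Sc K X (n + 1)).map t (Sum.inr ⟨j, (𝟙 (K j).pt, l)⟩) := by
            show _ = (Sum.inr ⟨j, (𝟙 (K j).pt ≫ t, l)⟩ : (Sc K X (n + 1)).obj d)
            rw [Category.id_comp]
          show h'.app d ((ιc K X (n + 1)).app d (Sum.inr ⟨j, (t, l)⟩)) = _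
          conv_lhs => rw [hmap]
          have hn3 : (ιc K X (n + 1)).app d
              ((Sc K X (n + 1)).map t (Sum.inr ⟨j, (𝟙 (K j).pt, l)⟩)) =
              (Cc K X).map t ((ιc K X (n + 1)).app (K j).pt
                (Sum.inr ⟨j, (𝟙 (K j).pt, l)⟩)) :=
            types_congr_hom ((ιc K X (n + 1)).naturality t) _
          rw [hn3]
          have hn4 : h'.app d ((Cc K X).map t ((ιc K X (n + 1)).app (K j).pt
              (Sum.inr ⟨j, (𝟙 (K j).pt, l)⟩))) =
              M.map t (h'.app (K j).pt ((ιc K X (n + 1)).app (K j).pt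
                (Sum.inr ⟨j, (𝟙 (K j).pt, l)⟩))) :=
            types_congr_hom (h'.naturality t) _
          rw [hn4, key]
          exact (gd_succ_inr K X hM f n d j t l).symm

end Universal


section Glue

variable (X : D ⥤ Type u)

/-- chain of statement-level objects -/
noncomputable def FsF : ℕ ⥤ (D ⥤ Type u) :=
  Functor.ofSequence (fun n => pStmt K n X ≫ coprod.inl)

lemma Fs_map_succ (n : ℕ) :
    (FsF K X).map (homOfLE (Nat.le_add_right n 1)) = pStmt K n X ≫ coprod.inl :=
  Functor.ofSequence_map_homOfLE_succ _ n

lemma sq1 (n : ℕ) :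
    (pStmt K n X ≫ coprod.inl) ≫
        (coprodIsoSum ((stages K (n + 1)).B.obj X) ((stages K (n + 1)).E.obj X)).hom =
      (coprodIsoSum ((stages K n).B.obj X) ((stages K n).E.obj X)).hom ≫ uc K X n := by
  rw [Category.assoc, inl_coprodIsoSum]
  show ((coprodIsoSum _ _).hom ≫ pc K n X) ≫ inlN _ _ = (coprodIsoSum _ _).hom ≫ uc K X n
  rw [Category.assoc]
  rfl

/-- the natural isomorphism between the two chains -/
noncomputable def chainIso : FsF K X ≅ Fc K X where
  hom := NatTrans.ofSequence
    (fun n => (coprodIsoSum ((stages K n).B.obj X) ((stages K n).E.obj X)).hom)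
    (fun n => by rw [Fs_map_succ, Fc_map_succ]; exact sq1 K X n)
  inv := NatTrans.ofSequence
    (fun n => (coprodIsoSum ((stages K n).B.obj X) ((stages K n).E.obj X)).inv)
    (fun n => by
      erw [Fs_map_succ, Fc_map_succ, Iso.comp_inv_eq, Category.assoc, sq1 K X n,
        Iso.inv_hom_id_assoc])
  hom_inv_id := by
    apply NatTrans.ext
    funext n
    erw [NatTrans.comp_app, NatTrans.ofSequence_app, NatTrans.ofSequence_app,
      Iso.hom_inv_id, NatTrans.id_app]
  inv_hom_id := by
    apply NatTrans.ext
    funext n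
    erw [NatTrans.comp_app, NatTrans.ofSequence_app, NatTrans.ofSequence_app,
      Iso.inv_hom_id, NatTrans.id_app]

/-- iso of the two colimits -/
noncomputable def ψIso : colimit (FsF K X) ≅ Cc K X :=
  HasColimit.isoOfNatIso (chainIso K X)

lemma ι_ψ (n : ℕ) :
    colimit.ι (FsF K X) n ≫ (ψIso K X).hom =
      (coprodIsoSum ((stages K n).B.obj X) ((stages K n).E.obj X)).hom ≫ ιc K X n := by
  erw [ψIso, HasColimit.isoOfNatIso_ι_hom]
  congr 1

end Glue


section Final

variable (X : D ⥤ Type u) {M : D ⥤ Type u}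

lemma final_univ (hM : IsModelF K M) (f : X ⟶ M) :
    ∃! g : colimit (FsF K X) ⟶ M,
      ((coprod.inl : (stages K 0).B.obj X ⟶
          ((stages K 0).B.obj X ⨿ (stages K 0).E.obj X)) ≫
        colimit.ι (FsF K X) 0) ≫ g = f := by
  refine ⟨(ψIso K X).hom ≫ gbar K X hM f, ?_, ?_⟩
  · have h2 : colimit.ι (FsF K X) 0 ≫ (ψIso K X).hom ≫ gbar K X hM f =
        (coprodIsoSum ((stages K 0).B.obj X) ((stages K 0).E.obj X)).hom ≫
          ιc K X 0 ≫ gbar K X hM f := by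
      erw [← Category.assoc, ι_ψ, Category.assoc]
    have h3 : ιc K X 0 ≫ gbar K X hM f = (gd K X hM f 0).1 := ι_gbar K X hM f 0
    calc (coprod.inl ≫ colimit.ι (FsF K X) 0) ≫ ((ψIso K X).hom ≫ gbar K X hM f)
        = coprod.inl ≫ colimit.ι (FsF K X) 0 ≫ (ψIso K X).hom ≫ gbar K X hM f := by
          erw [Category.assoc]
      _ = coprod.inl ≫ (coprodIsoSum _ _).hom ≫ ιc K X 0 ≫ gbar K X hM f := by erw [h2]
      _ = coprod.inl ≫ (coprodIsoSum _ _).hom ≫ (gd K X hM f 0).1 := by rw [h3]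
      _ = (coprod.inl ≫ (coprodIsoSum _ _).hom) ≫ (gd K X hM f 0).1 := by
          erw [Category.assoc]
      _ = inlN _ _ ≫ (gd K X hM f 0).1 := by rw [inl_coprodIsoSum]
      _ = (show (stages K 0).B.obj X ⟶ M from f) := by apply NatTrans.ext; funext d; ext x; rfl
  · intro g' hg'
    have h5 : ιc K X 0 ≫ (ψIso K X).inv =
        (coprodIsoSum ((stages K 0).B.obj X) ((stages K 0).E.obj X)).inv ≫
          colimit.ι (FsF K X) 0 := by
      erw [Iso.comp_inv_eq, Category.assoc, ι_ψ, Iso.inv_hom_id_assoc]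
    have h6 : inlN ((stages K 0).B.obj X) ((stages K 0).E.obj X) ≫
        (coprodIsoSum ((stages K 0).B.obj X) ((stages K 0).E.obj X)).inv =
        (coprod.inl : (stages K 0).B.obj X ⟶ _) := by
      rw [← inl_coprodIsoSum, Category.assoc, Iso.hom_inv_id, Category.comp_id]
    have hfact : inlN X PEmptyF ≫ ιc K X 0 ≫ ((ψIso K X).inv ≫ g') = f := by
      have h7 : ιc K X 0 ≫ ((ψIso K X).inv ≫ g') =
          (coprodIsoSum ((stages K 0).B.obj X) ((stages K 0).E.obj X)).inv ≫
            colimit.ι (FsF K X) 0 ≫ g' := by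
        erw [← Category.assoc, h5, Category.assoc]
      erw [h7, ← Category.assoc]
      have h8 : inlN X PEmptyF ≫
          (coprodIsoSum ((stages K 0).B.obj X) ((stages K 0).E.obj X)).inv =
          (coprod.inl : (stages K 0).B.obj X ⟶ _) := h6
      erw [h8, ← Category.assoc]
      exact hg'
    have heq : (ψIso K X).inv ≫ g' = gbar K X hM f := by
      apply colimit.hom_ext
      intro n
      exact (unique_aux K X hM f ((ψIso K X).inv ≫ g') hfact n).trans
        (ι_gbar K X hM f n).symm
    calc g' = (ψIso K X).hom ≫ (ψIso K X).inv ≫ g' := by rw [Iso.hom_inv_id_assoc]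
      _ = (ψIso K X).hom ≫ gbar K X hM f := by rw [heq]

end Final

end ReflAux

open ReflAux in
theorem reflector_presentation_kan
    {ι : Type u} [Finite ι] (K : ι → SketchCone D)
    (hfin : ∀ i : ι, Finite (Σ (a : (K i).A) (b : (K i).A), a ⟶ b)) :
    ∃ (B E : ℕ → (D ⥤ Type u) ⥤ (D ⥤ Type u))
      (p : ∀ (n : ℕ) (X : D ⥤ Type u), ((B n).obj X ⨿ (E n).obj X) ⟶ (B (n + 1)).obj X)
      (hB0 : B 0 = 𝟭 (D ⥤ Type u)),
      (∀ X : D ⥤ Type u, Nonempty (IsInitial ((E 0).obj X))) ∧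
      (∀ (n : ℕ) (X Y : D ⥤ Type u) (f : X ⟶ Y),
        coprod.map ((B n).map f) ((E n).map f) ≫ p n Y = p n X ≫ (B (n + 1)).map f) ∧
      (∀ (n : ℕ) (X : D ⥤ Type u) (d : D), Function.Surjective ((p n X).app d)) ∧
      (∀ (n : ℕ) (X : D ⥤ Type u),
        Nonempty ((E (n + 1)).obj X ≅ kanObj K ((B n).obj X ⨿ (E n).obj X))) ∧
      (∀ X : D ⥤ Type u,
        IsModelF K
          (colimit (Functor.ofSequence
            (X := fun n => (B n).obj X ⨿ (E n).obj X) (fun n => p n X ≫ coprod.inl))) ∧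
        ∀ (M : D ⥤ Type u), IsModelF K M → ∀ f : X ⟶ M,
          ∃! g : colimit (Functor.ofSequence
              (X := fun n => (B n).obj X ⨿ (E n).obj X) (fun n => p n X ≫ coprod.inl)) ⟶ M,
            (eqToHom (show X = (B 0).obj X by simp [hB0]) ≫ coprod.inl ≫
              colimit.ι (Functor.ofSequence
                (X := fun n => (B n).obj X ⨿ (E n).obj X) (fun n => p n X ≫ coprod.inl)) 0) ≫
              g = f) := by
  refine ⟨fun n => (stages K n).B, fun n => (stages K n).E,
    fun n X => pStmt K n X, rfl, ?_, ?_, ?_, ?_, ?_⟩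
  · intro X
    exact ⟨isInitialPEmptyF⟩
  · intro n X Y f
    exact pStmt_natural K n f
  · intro n X d
    exact pStmt_surjective K n X d
  · intro n X
    exact ⟨EIso K n X⟩
  · intro X
    constructor
    · exact isModelF_of_iso K (ψIso K X).symm (isModel_Cc K X hfin)
    · intro M hM f
      obtain ⟨g, hg, hu⟩ := final_univ K X hM f
      exact ⟨g, hg, fun g' hg' => hu g' hg'⟩
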